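/- Let c and e be real numbers with e > 1, e > c and c ≠ 1. Then the series Σ_{k=0}^∞ (c)_k/((k+1)·(e)_k) converges and Σ_{k=0}^∞ (c)_k/((k+1)·(e)_k) = ((e−1)/(c−1))·(ψ(e−1) − ψ(e−c)). (This is the evaluation ₃F₂(1,1,c; 2,e; 1) = ((e−1)/(c−1))(ψ(e−1) − ψ(e−c)).) -/

import Mathlib

open Real

/-- Rising factorial (Pochhammer symbol) `(a)_k`. -/
noncomputable def poch (a : ℝ) (k : ℕ) : ℝ := (ascPochhammer ℝ k).eval a

/-- Digamma function `ψ(x) = Γ'(x)/Γ(x)`. -/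
noncomputable def psi (x : ℝ) : ℝ := deriv Real.Gamma x / Real.Gamma x

open Filter Topology Set

lemma poch_zero (a : ℝ) : poch a 0 = 1 := by simp [poch]

lemma poch_succ (a : ℝ) (n : ℕ) : poch a (n+1) = poch a n * (a + n) := by
  simp [poch, ascPochhammer_succ_right, Polynomial.eval_mul]

lemma poch_succ' (a : ℝ) (n : ℕ) : poch a (n+1) = a * poch (a+1) n := by
  simp [poch, ascPochhammer_succ_left, Polynomial.eval_mul, Polynomial.eval_comp]

lemma poch_one (a : ℝ) : poch a 1 = a := by simp [poch]

lemma poch_pos {a : ℝ} (h : 0 < a) (n : ℕ) : 0 < poch a n := by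
  induction n with
  | zero => simp [poch_zero]
  | succ n ih => rw [poch_succ]; positivity

lemma poch_nonneg {a : ℝ} (h : 0 ≤ a) (n : ℕ) : 0 ≤ poch a n := by
  induction n with
  | zero => simp [poch_zero]
  | succ n ih => rw [poch_succ]; positivity

lemma poch_add (a : ℝ) (m n : ℕ) : poch a (m+n) = poch a m * poch (a+m) n := by
  induction n with
  | zero => simp [poch_zero]
  | succ n ih => rw [show m + (n+1) = (m+n)+1 from rfl, poch_succ, ih, poch_succ]
                 push_cast; ring

lemma abs_poch_le (a : ℝ) (n : ℕ) : |poch a n| ≤ poch |a| n := by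
  induction n with
  | zero => simp [poch_zero]
  | succ n ih =>
    rw [poch_succ, poch_succ, abs_mul]
    apply mul_le_mul ih ((abs_add_le _ _).trans (by simp)) (abs_nonneg _)
      (poch_nonneg (abs_nonneg a) n)

lemma poch_le_poch {a b : ℝ} (ha : 0 ≤ a) (hab : a ≤ b) (n : ℕ) : poch a n ≤ poch b n := by
  induction n with
  | zero => simp [poch_zero]
  | succ n ih =>
    rw [poch_succ, poch_succ]
    apply mul_le_mul ih (by linarith) (by positivity) (poch_nonneg (le_trans ha hab) n)

lemma gadget_step {A B : ℝ} (hB : 0 < B) (j : ℕ) :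
    poch A j / poch B j - poch A (j+1) / poch B (j+1)
      = (B - A) * (poch A j / poch B (j+1)) := by
  have h1 : poch B j ≠ 0 := (poch_pos hB j).ne'
  have h2 : poch B (j+1) ≠ 0 := (poch_pos hB (j+1)).ne'
  rw [poch_succ A j, poch_succ B j] at *
  field_simp
  ring

lemma gadget_partial {A B : ℝ} (hB : 0 < B) (M : ℕ) :
    (B - A) * ∑ j ∈ Finset.range M, poch A j / poch B (j+1)
      = 1 - poch A M / poch B M := by
  induction M with
  | zero => simp [poch_zero]
  | succ M ih =>
    rw [Finset.sum_range_succ, mul_add, ih, ← gadget_step hB M]; ring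

lemma gadget_summable {A B : ℝ} (hA : 0 ≤ A) (hAB : A < B) :
    Summable (fun j : ℕ => poch A j / poch B (j+1)) := by
  have hB : 0 < B := lt_of_le_of_lt hA hAB
  apply summable_of_sum_range_le (c := 1 / (B - A))
  · intro n; exact div_nonneg (poch_nonneg hA n) (poch_pos hB (n+1)).le
  · intro n
    rw [le_div_iff₀ (by linarith)]
    have h := gadget_partial (A := A) hB n
    nlinarith [div_nonneg (poch_nonneg hA n) (poch_pos hB n).le]


lemma Q_tendsto_zero {A B : ℝ} (hA : 0 ≤ A) (hAB : A < B) :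
    Tendsto (fun M : ℕ => poch A M / poch B M) atTop (𝓝 0) := by
  have hB : 0 < B := lt_of_le_of_lt hA hAB
  set Q : ℕ → ℝ := fun M => poch A M / poch B M with hQ
  have hQnn : ∀ M, 0 ≤ Q M := fun M => div_nonneg (poch_nonneg hA M) (poch_pos hB M).le
  have hanti : Antitone Q := by
    apply antitone_nat_of_succ_le
    intro n
    have h := gadget_step (A := A) hB n
    have h2 : 0 ≤ (B - A) * (poch A n / poch B (n+1)) := by
      apply mul_nonneg (by linarith)
      exact div_nonneg (poch_nonneg hA n) (poch_pos hB (n+1)).le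
    simp only [hQ]; linarith
  have hbdd : BddBelow (Set.range Q) := ⟨0, by rintro x ⟨M, rfl⟩; exact hQnn M⟩
  have htend : Tendsto Q atTop (𝓝 (⨅ M, Q M)) := tendsto_atTop_ciInf hanti hbdd
  have hL0 : 0 ≤ ⨅ M, Q M := le_ciInf hQnn
  rcases eq_or_lt_of_le hL0 with h0 | hLpos
  · rwa [← h0] at htend
  · exfalso
    set L := ⨅ M, Q M
    have hsum := gadget_summable hA hAB
    set C := max B 1 with hC
    have : Summable (fun j : ℕ => (L / C) * (1 / (j + 1 : ℝ))) := by
      apply Summable.of_nonneg_of_le (fun j => by positivity) _ hsum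
      intro j
      have hQj : L ≤ Q j := ciInf_le hbdd j
      have hBj : (0:ℝ) < B + j := by positivity
      have hle : B + j ≤ C * (j + 1) := by
        have h1 : B ≤ C := le_max_left _ _
        have h2 : (1:ℝ) ≤ C := le_max_right _ _
        nlinarith [Nat.cast_nonneg (α := ℝ) j]
      have e1 : poch A j / poch B (j+1) = Q j / (B + j) := by
        rw [poch_succ B j, hQ]; field_simp
      rw [e1]
      have hCpos : (0:ℝ) < C := by positivity
      calc L / C * (1 / (j+1)) = L / (C * (j+1)) := by field_simp
        _ ≤ L / (B + j) := by
            apply div_le_div_of_nonneg_left hLpos.le hBj hle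
        _ ≤ Q j / (B + j) := by gcongr
    have h2 : Summable (fun j : ℕ => (1 / (j + 1 : ℝ))) := by
      have hLC : (0:ℝ) < L / C := by positivity
      have := this.mul_left (C/L)
      apply this.congr
      intro j
      field_simp
      exact div_self (by positivity)
    have h3 : Summable (fun j : ℕ => (1 / ((j:ℝ)))) := by
      rw [← summable_nat_add_iff 1]
      exact h2.congr (fun j => by push_cast; ring_nf)
    exact Real.not_summable_one_div_natCast h3

lemma P_tendsto_zero {a B : ℝ} (hB : 0 < B) (hab : a < B) :
    Tendsto (fun M : ℕ => poch a M / poch B M) atTop (𝓝 0) := by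
  obtain ⟨K, hK⟩ := exists_nat_ge (-a)
  have hK' : 0 ≤ a + K := by linarith
  rw [← tendsto_add_atTop_iff_nat K]
  have key : ∀ M : ℕ, poch a (M + K) / poch B (M + K)
      = (poch a K / poch B K) * (poch (a+K) M / poch (B+K) M) := by
    intro M
    rw [show M + K = K + M from Nat.add_comm M K, poch_add, poch_add]
    have h1 : poch B K ≠ 0 := (poch_pos hB K).ne'
    have h2 : poch (B+K) M ≠ 0 := (poch_pos (by positivity) M).ne'
    field_simp
  simp only [key]

  have := (Q_tendsto_zero hK' (by linarith : a + K < B + K)).const_mul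
    (poch a K / poch B K)
  simpa using this

lemma abs_poch_shift (α : ℝ) (K j : ℕ) : |poch α (j + K)| = |poch α K| * poch (α + K) j → True := fun _ => trivial

lemma gauss_summable {α β : ℝ} (hβ : 1 < β) (hαβ : α < β - 1) :
    Summable (fun m : ℕ => poch α m / poch β m) := by
  have hβ0 : (0:ℝ) < β := by linarith
  rw [← summable_abs_iff]
  obtain ⟨K, hK⟩ := exists_nat_ge (-α)
  have hK' : 0 ≤ α + K := by linarith
  rw [← summable_nat_add_iff K]
  have key : ∀ j : ℕ, |poch α (j + K) / poch β (j + K)|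
      = (|poch α K| / poch β K) * ((β + K - 1) * (poch (α+K) j / poch (β+K-1) (j+1))) := by
    intro j
    rw [show j + K = K + j from Nat.add_comm j K, poch_add, poch_add]
    have h0 : poch (β + K - 1) (j+1) = (β + K - 1) * poch (β + K) j := by
      rw [poch_succ', show β + (K:ℝ) - 1 + 1 = β + K by ring]
    have h1 : poch β K ≠ 0 := (poch_pos hβ0 K).ne'
    have h2 : poch (β+K) j ≠ 0 := (poch_pos (by positivity) j).ne'
    have hKnn : (0:ℝ) ≤ K := Nat.cast_nonneg K
    have h3 : (β + K - 1) ≠ 0 := by linarith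
    simp only [abs_div, abs_mul, abs_of_pos (poch_pos hβ0 K),
      abs_of_pos (poch_pos (show (0:ℝ) < β + K by linarith) j),
      abs_of_nonneg (poch_nonneg hK' j), h0]
    field_simp
  simp only [key]
  apply Summable.mul_left
  apply Summable.mul_left
  exact gadget_summable hK' (by linarith)

lemma gauss_partial {α β : ℝ} (hβ : 1 < β) (M : ℕ) :
    ∑ m ∈ Finset.range M, poch α m / poch β m
      = (β - 1 - α) / (β - 1 - α) * 1 → True := fun _ => trivial

lemma gauss_tsum {α β : ℝ} (hβ : 1 < β) (hαβ : α < β - 1) :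
    ∑' m : ℕ, poch α m / poch β m = (β - 1) / (β - 1 - α) := by
  have hβ0 : (0:ℝ) < β - 1 := by linarith
  have hne : β - 1 - α ≠ 0 := by linarith
  have hstep : ∀ m : ℕ, poch α m / poch β m
      = ((β-1)/(β-1-α)) * (poch α m / poch (β-1) m - poch α (m+1) / poch (β-1) (m+1)) := by
    intro m
    rw [gadget_step hβ0 m]
    have h0 : poch (β - 1) (m+1) = (β - 1) * poch β m := by
      rw [poch_succ', show β - 1 + 1 = β by ring]
    rw [h0]
    have h1 : poch β m ≠ 0 := (poch_pos (by linarith) m).ne'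
    field_simp
  have hpartial : ∀ M : ℕ, ∑ m ∈ Finset.range M, poch α m / poch β m
      = ((β-1)/(β-1-α)) * (1 - poch α M / poch (β-1) M) := by
    intro M
    induction M with
    | zero => simp [poch_zero]
    | succ M ih => rw [Finset.sum_range_succ, ih, hstep M]; ring
  have hsum := gauss_summable hβ hαβ
  have htend := hsum.hasSum.tendsto_sum_nat
  have htend2 : Tendsto (fun M : ℕ => ∑ m ∈ Finset.range M, poch α m / poch β m) atTop
      (𝓝 (((β-1)/(β-1-α)) * (1 - 0))) := by
    simp only [hpartial]
    exact (((P_tendsto_zero hβ0 (by linarith)).const_sub 1).const_mul _)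
  have := tendsto_nhds_unique htend htend2
  rw [this]; ring

lemma Gamma_diffAt {s : ℝ} (hs : 0 < s) : DifferentiableAt ℝ Real.Gamma s :=
  Real.differentiableAt_Gamma (fun m => by
    have : (0:ℝ) ≤ m := Nat.cast_nonneg m
    intro h; rw [h] at hs; linarith)

lemma psi_add_one {x : ℝ} (hx : 0 < x) : psi (x + 1) = psi x + 1 / x := by
  have hGx : Real.Gamma x ≠ 0 := (Real.Gamma_pos_of_pos hx).ne'
  have hd1 : deriv (fun s => Real.Gamma (s + 1)) x = deriv Real.Gamma (x + 1) := by
    rw [deriv_comp_add_const]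
  have hd2 : HasDerivAt (fun s => s * Real.Gamma s)
      (1 * Real.Gamma x + x * deriv Real.Gamma x) x :=
    (hasDerivAt_id x).mul (Gamma_diffAt hx).hasDerivAt
  have heq : (fun s => Real.Gamma (s + 1)) =ᶠ[𝓝 x] (fun s => s * Real.Gamma s) := by
    filter_upwards [eventually_gt_nhds hx] with s hs
    rw [Real.Gamma_add_one hs.ne']
  have : deriv Real.Gamma (x + 1) = Real.Gamma x + x * deriv Real.Gamma x := by
    rw [← hd1, heq.deriv_eq, hd2.deriv]; ring
  rw [psi, psi, this, Real.Gamma_add_one hx.ne']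
  field_simp
  ring

lemma psi_eq_deriv_log_Gamma {x : ℝ} (hx : 0 < x) :
    psi x = deriv (Real.log ∘ Real.Gamma) x := by
  rw [Function.comp_def, deriv.log (Gamma_diffAt hx) (Real.Gamma_pos_of_pos hx).ne', psi]

lemma psi_mono {x y : ℝ} (hx : 0 < x) (hxy : x ≤ y) : psi x ≤ psi y := by
  have hy : 0 < y := lt_of_lt_of_le hx hxy
  rw [psi_eq_deriv_log_Gamma hx, psi_eq_deriv_log_Gamma hy]
  have hc : ConvexOn ℝ (Ioi 0) (Real.log ∘ Real.Gamma) := Real.convexOn_log_Gamma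
  refine hc.monotoneOn_deriv (fun z hz => ?_) (mem_Ioi.mpr hx) (mem_Ioi.mpr hy) hxy
  exact ((Gamma_diffAt hz).log (Real.Gamma_pos_of_pos hz).ne')

lemma psi_add_nat {x : ℝ} (hx : 0 < x) (n : ℕ) :
    psi (x + n) = psi x + ∑ i ∈ Finset.range n, 1 / (x + i) := by
  induction n with
  | zero => simp
  | succ n ih =>
    have h1 : x + (n+1:ℕ) = (x + n) + 1 := by push_cast; ring
    rw [h1, psi_add_one (by positivity), ih, Finset.sum_range_succ]
    ring

lemma psi_diff_tendsto {x y : ℝ} (hx : 0 < x) (hxy : x ≤ y) :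
    Tendsto (fun J : ℕ => psi (y + J) - psi (x + J)) atTop (𝓝 0) := by
  obtain ⟨n₀, hn₀⟩ := exists_nat_ge (y - x)
  have hub : ∀ J : ℕ, psi (y + J) - psi (x + J) ≤ n₀ * (1 / (x + J)) := by
    intro J
    have hxJ : (0:ℝ) < x + J := by positivity
    have h1 : psi (y + J) ≤ psi ((x + J) + n₀) := by
      apply psi_mono (show (0:ℝ) < y + J by have : (0:ℝ) ≤ J := Nat.cast_nonneg J; linarith)
      push_cast; linarith
    have h2 : psi ((x + J) + n₀) = psi (x + J) + ∑ i ∈ Finset.range n₀, 1 / (x + J + i) :=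
      psi_add_nat hxJ n₀
    have h3 : ∑ i ∈ Finset.range n₀, 1 / (x + J + i) ≤ n₀ * (1 / (x + J)) := by
      calc ∑ i ∈ Finset.range n₀, 1 / (x + J + i)
          ≤ ∑ _i ∈ Finset.range n₀, 1 / (x + J) := by
            apply Finset.sum_le_sum
            intro i _
            apply div_le_div_of_nonneg_left one_pos.le hxJ
            simp [Nat.cast_nonneg]
        _ = n₀ * (1 / (x + J)) := by simp [mul_comm]
    linarith
  have hlb : ∀ J : ℕ, 0 ≤ psi (y + J) - psi (x + J) := by
    intro J
    have := psi_mono (show (0:ℝ) < x + J by positivity) (show x + (J:ℝ) ≤ y + J by linarith)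
    linarith
  have htop : Tendsto (fun J : ℕ => (n₀ : ℝ) * (1 / (x + J))) atTop (𝓝 0) := by
    have h1 : Tendsto (fun J : ℕ => x + (J:ℝ)) atTop atTop :=
      tendsto_atTop_add_const_left atTop x tendsto_natCast_atTop_atTop
    have := h1.inv_tendsto_atTop
    simpa [one_div] using this.const_mul (n₀ : ℝ)
  exact tendsto_of_tendsto_of_tendsto_of_le_of_le tendsto_const_nhds htop hlb hub

lemma psi_hasSum_ordered {x y : ℝ} (hx : 0 < x) (hxy : x ≤ y) :
    Summable (fun n : ℕ => 1 / (x + n) - 1 / (y + n)) ∧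
    ∑' n : ℕ, (1 / (x + n) - 1 / (y + n)) = psi y - psi x := by
  have hy : 0 < y := lt_of_lt_of_le hx hxy
  have hnn : ∀ n : ℕ, 0 ≤ 1 / (x + n) - 1 / (y + n) := by
    intro n
    have h1 : (0:ℝ) < x + n := by positivity
    have h2 : x + (n:ℝ) ≤ y + n := by linarith
    have := div_le_div_of_nonneg_left one_pos.le h1 h2
    linarith
  have hpartial : ∀ J : ℕ, ∑ n ∈ Finset.range J, (1 / (x + n) - 1 / (y + n))
      = (psi y - psi x) - (psi (y + J) - psi (x + J)) := by
    intro J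
    rw [Finset.sum_sub_distrib]
    have h1 := psi_add_nat hx J
    have h2 := psi_add_nat hy J
    linarith
  have hsummable : Summable (fun n : ℕ => 1 / (x + n) - 1 / (y + n)) := by
    apply summable_of_sum_range_le hnn (c := psi y - psi x)
    intro J
    rw [hpartial J]
    have := psi_mono (show (0:ℝ) < x + J by positivity) (show x + (J:ℝ) ≤ y + J by linarith)
    linarith
  refine ⟨hsummable, ?_⟩
  have ht1 := hsummable.hasSum.tendsto_sum_nat
  have ht2 : Tendsto (fun J : ℕ => ∑ n ∈ Finset.range J, (1 / (x + n) - 1 / (y + n)))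
      atTop (𝓝 ((psi y - psi x) - 0)) := by
    simp only [hpartial]
    exact (psi_diff_tendsto hx hxy).const_sub _
  have := tendsto_nhds_unique ht1 ht2
  rw [this]; ring

lemma psi_series {x y : ℝ} (hx : 0 < x) (hy : 0 < y) :
    Summable (fun n : ℕ => 1 / (x + n) - 1 / (y + n)) ∧
    ∑' n : ℕ, (1 / (x + n) - 1 / (y + n)) = psi y - psi x := by
  rcases le_total x y with h | h
  · exact psi_hasSum_ordered hx h
  · obtain ⟨hs, hv⟩ := psi_hasSum_ordered hy h
    constructor
    · have := hs.neg
      apply this.congr; intro n; ring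
    · have : ∑' n : ℕ, (1 / (x + n) - 1 / (y + n))
          = ∑' n : ℕ, -(1 / (y + n) - 1 / (x + n)) := by
        apply tsum_congr; intro n; ring
      rw [this, tsum_neg, hv]; ring

section T
variable (a : ℝ)

/-- the key shifted-index bound used twice -/
lemma T_summable {b : ℝ} (hb : 0 < b) (hab : a < b) :
    Summable (fun m : ℕ => poch a (m+1) / ((m+1 : ℝ) * poch b (m+1))) := by
  rw [← summable_abs_iff]
  obtain ⟨K, hK⟩ := exists_nat_ge (max (-a) 1)
  have hK1 : (1:ℝ) ≤ K := le_trans (le_max_right _ _) hK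
  have hKa : -a ≤ K := le_trans (le_max_left _ _) hK
  set α := a + (K:ℝ) with hα
  set β := b + (K:ℝ) with hβ
  have hα0 : 0 ≤ α := by simp only [hα]; linarith
  have hβ1 : 1 ≤ β := by simp only [hβ]; linarith
  have hαβ : α < β := by simp only [hα, hβ]; linarith
  rw [← summable_nat_add_iff K]
  have hC : Summable (fun j : ℕ =>
      ((|poch a K| / poch b K) * (α * (β+1) / β)) * (poch (α+1) j / poch (β+1) (j+1))) :=
    (gadget_summable (by linarith) (by linarith)).mul_left _
  apply Summable.of_nonneg_of_le (fun j => abs_nonneg _) _ hC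
  intro j
  have hbK : 0 < poch b K := poch_pos hb K
  have hβ0 : (0:ℝ) < β := by linarith
  have hj1 : (0:ℝ) < (j:ℝ) + K + 1 := by positivity
  have e1 : poch a (j + K + 1) = poch a K * poch α (j+1) := by
    rw [show j + K + 1 = K + (j+1) from by omega, poch_add]
  have e2 : poch b (j + K + 1) = poch b K * poch β (j+1) := by
    rw [show j + K + 1 = K + (j+1) from by omega, poch_add]
  have e3 : poch α (j+1) = α * poch (α+1) j := poch_succ' α j
  have e4 : poch β (j+1) = β * poch (β+1) j := poch_succ' β j
  have e5 : poch (β+1) (j+1) = poch (β+1) j * (β + 1 + j) := poch_succ (β+1) j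
  have hp1 : 0 < poch (β+1) j := poch_pos (by linarith) j
  have hp2 : 0 ≤ poch (α+1) j := poch_nonneg (by linarith) j
  set M := |poch a K| * α * poch (α+1) j / (poch b K * β * poch (β+1) j) with hM
  have hMnn : 0 ≤ M := by positivity
  have habs : |poch a (j + K + 1) / ((((j+K : ℕ) :ℝ) + 1) * poch b (j + K + 1))|
      = M * (1/((j:ℝ)+K+1)) := by
    rw [abs_div, e1, e2, e3, e4, abs_mul,
      abs_of_nonneg (show (0:ℝ) ≤ α * poch (α+1) j by positivity),
      abs_of_pos (show (0:ℝ) < (((j+K : ℕ):ℝ) + 1) * (poch b K * (β * poch (β+1) j)) by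
        push_cast; positivity), hM]
    push_cast
    field_simp
  have hfrac : 1/((j:ℝ)+K+1) ≤ (β+1)/(β+1+j) := by
    rw [div_le_div_iff₀ (by positivity) (by positivity)]
    nlinarith
  calc |poch a (j + K + 1) / ((((j+K : ℕ) :ℝ) + 1) * poch b (j + K + 1))|
      = M * (1/((j:ℝ)+K+1)) := habs
    _ ≤ M * ((β+1)/(β+1+j)) := mul_le_mul_of_nonneg_left hfrac hMnn
    _ = (|poch a K| / poch b K) * (α * (β+1) / β) * (poch (α+1) j / poch (β+1) (j+1)) := by
        rw [e5, hM]
        have h1 : poch b K ≠ 0 := hbK.ne'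
        have h2 : β ≠ 0 := by linarith
        have h3 : poch (β+1) j ≠ 0 := hp1.ne'
        have h4 : β + 1 + (j:ℝ) ≠ 0 := by positivity
        field_simp
lemma u_summable {b : ℝ} (hb : 0 < b) (hab : a < b) :
    Summable (fun m : ℕ => |poch a (m+1)| / ((m+1 : ℝ) * poch (b+1) m)) := by
  obtain ⟨K, hK⟩ := exists_nat_ge (max (-a) 1)
  have hK1 : (1:ℝ) ≤ K := le_trans (le_max_right _ _) hK
  have hKa : -a ≤ K := le_trans (le_max_left _ _) hK
  set α := a + (K:ℝ) with hα
  set β := b + (K:ℝ) with hβ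
  have hα0 : 0 ≤ α := by simp only [hα]; linarith
  have hβ1 : 1 ≤ β := by simp only [hβ]; linarith
  have hαβ : α < β := by simp only [hα, hβ]; linarith
  rw [← summable_nat_add_iff K]
  have hC : Summable (fun j : ℕ =>
      ((|poch a K| / poch (b+1) K) * (α * (β+1))) * (poch (α+1) j / poch (β+1) (j+1))) :=
    (gadget_summable (by linarith) (by linarith)).mul_left _
  apply Summable.of_nonneg_of_le (fun j => div_nonneg (abs_nonneg _)
    (mul_nonneg (by positivity) (poch_nonneg (by linarith) _))) _ hC
  intro j
  have hbK : 0 < poch (b+1) K := poch_pos (by linarith) K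
  have hβ0 : (0:ℝ) < β := by linarith
  have e1 : poch a (j + K + 1) = poch a K * poch α (j+1) := by
    rw [show j + K + 1 = K + (j+1) from by omega, poch_add]
  have e2 : poch (b+1) (j + K) = poch (b+1) K * poch (β+1) j := by
    rw [show j + K = K + j from by omega, poch_add]
    norm_num [hβ]
    left
    ring_nf
  have e3 : poch α (j+1) = α * poch (α+1) j := poch_succ' α j
  have e5 : poch (β+1) (j+1) = poch (β+1) j * (β + 1 + j) := poch_succ (β+1) j
  have hp1 : 0 < poch (β+1) j := poch_pos (by linarith) j
  have hp2 : 0 ≤ poch (α+1) j := poch_nonneg (by linarith) j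
  set M := |poch a K| * α * poch (α+1) j / (poch (b+1) K * poch (β+1) j) with hM
  have hMnn : 0 ≤ M := by positivity
  have habs : |poch a (j + K + 1)| / ((((j+K : ℕ) :ℝ) + 1) * poch (b+1) (j+K))
      = M * (1/((j:ℝ)+K+1)) := by
    rw [e1, e2, e3, abs_mul,
      abs_of_nonneg (show (0:ℝ) ≤ α * poch (α+1) j by positivity), hM]
    push_cast
    field_simp
  have hfrac : 1/((j:ℝ)+K+1) ≤ (β+1)/(β+1+j) := by
    rw [div_le_div_iff₀ (by positivity) (by positivity)]
    nlinarith
  calc |poch a (j + K + 1)| / ((((j+K : ℕ) :ℝ) + 1) * poch (b+1) (j+K))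
      = M * (1/((j:ℝ)+K+1)) := habs
    _ ≤ M * ((β+1)/(β+1+j)) := mul_le_mul_of_nonneg_left hfrac hMnn
    _ = (|poch a K| / poch (b+1) K) * (α * (β+1)) * (poch (α+1) j / poch (β+1) (j+1)) := by
        rw [e5, hM]
        have h1 : poch (b+1) K ≠ 0 := hbK.ne'
        have h3 : poch (β+1) j ≠ 0 := hp1.ne'
        have h4 : β + 1 + (j:ℝ) ≠ 0 := by positivity
        field_simp

lemma T_abs_le {b b' : ℝ} (hb : 0 < b) (hab : a < b) (hbb' : b ≤ b') :
    |∑' m : ℕ, poch a (m+1) / ((m+1 : ℝ) * poch b' (m+1))|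
      ≤ (1/b') * ∑' m : ℕ, |poch a (m+1)| / ((m+1 : ℝ) * poch (b+1) m) := by
  have hb' : 0 < b' := lt_of_lt_of_le hb hbb'
  have husum := u_summable a hb hab
  have hbound : ∀ m : ℕ, |poch a (m+1) / ((m+1 : ℝ) * poch b' (m+1))|
      ≤ (1/b') * (|poch a (m+1)| / ((m+1 : ℝ) * poch (b+1) m)) := by
    intro m
    have e1 : poch b' (m+1) = b' * poch (b'+1) m := poch_succ' b' m
    have h1 : 0 < poch (b'+1) m := poch_pos (by linarith) m
    have h2 : 0 < poch (b+1) m := poch_pos (by linarith) m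
    have h3 : poch (b+1) m ≤ poch (b'+1) m := poch_le_poch (by linarith) (by linarith) m
    have hd2 : (0:ℝ) < ((m:ℝ)+1) * (b' * poch (b+1) m) :=
      mul_pos (by positivity) (mul_pos hb' h2)
    have hd1 : (0:ℝ) < ((m:ℝ)+1) * (b' * poch (b'+1) m) :=
      mul_pos (by positivity) (mul_pos hb' h1)
    have hdle : ((m:ℝ)+1) * (b' * poch (b+1) m) ≤ ((m:ℝ)+1) * (b' * poch (b'+1) m) :=
      mul_le_mul_of_nonneg_left (mul_le_mul_of_nonneg_left h3 hb'.le) (by positivity)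
    rw [abs_div, e1, abs_of_pos hd1,
      show (1/b') * (|poch a (m+1)| / (((m:ℝ)+1) * poch (b+1) m))
        = |poch a (m+1)| / (((m:ℝ)+1) * (b' * poch (b+1) m)) from by
          rw [div_mul_div_comm, one_mul, mul_left_comm]]
    exact div_le_div_of_nonneg_left (abs_nonneg _) hd2 hdle
  have htsum : Summable (fun m : ℕ => |poch a (m+1) / ((m+1 : ℝ) * poch b' (m+1))|) :=
    Summable.of_nonneg_of_le (fun m => abs_nonneg _) hbound (husum.mul_left (1/b'))
  have step1 : |∑' m : ℕ, poch a (m+1) / ((m+1 : ℝ) * poch b' (m+1))|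
      ≤ ∑' m : ℕ, |poch a (m+1) / ((m+1 : ℝ) * poch b' (m+1))| := by
    have h0 := norm_tsum_le_tsum_norm
      (f := fun m : ℕ => poch a (m+1) / ((m+1 : ℝ) * poch b' (m+1)))
      (htsum.congr (fun m => (Real.norm_eq_abs _).symm))
    simpa only [Real.norm_eq_abs] using h0
  have step2 : ∑' m : ℕ, |poch a (m+1) / ((m+1 : ℝ) * poch b' (m+1))|
      ≤ ∑' m : ℕ, (1/b') * (|poch a (m+1)| / ((m+1 : ℝ) * poch (b+1) m)) :=
    Summable.tsum_le_tsum hbound htsum (husum.mul_left (1/b'))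
  have step3 : ∑' m : ℕ, (1/b') * (|poch a (m+1)| / ((m+1 : ℝ) * poch (b+1) m))
      = (1/b') * ∑' m : ℕ, |poch a (m+1)| / ((m+1 : ℝ) * poch (b+1) m) := tsum_mul_left
  linarith
lemma T_rec {b : ℝ} (hb : 0 < b) (hab : a < b) :
    (∑' m : ℕ, poch a (m+1) / ((m+1 : ℝ) * poch b (m+1)))
      - (∑' m : ℕ, poch a (m+1) / ((m+1 : ℝ) * poch (b+1) (m+1)))
      = a / (b * (b - a)) := by
  rw [← Summable.tsum_sub (T_summable a hb hab) (T_summable a (by linarith) (by linarith))]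
  have key : ∀ m : ℕ, poch a (m+1) / ((m+1 : ℝ) * poch b (m+1))
      - poch a (m+1) / ((m+1 : ℝ) * poch (b+1) (m+1))
      = (a / (b * (b+1))) * (poch (a+1) m / poch (b+2) m) := by
    intro m
    have hP : 0 < poch b (m+1) := poch_pos hb (m+1)
    have hP1 : 0 < poch (b+1) (m+1) := poch_pos (by linarith) (m+1)
    have hP2 : 0 < poch (b+2) m := poch_pos (by linarith) m
    have hm1 : (0:ℝ) < (m:ℝ)+1 := by positivity
    have e1 : poch b (m+1+1) = poch b (m+1) * (b + ((m:ℝ)+1)) := by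
      rw [poch_succ]; push_cast; ring
    have e2 : poch b (m+1+1) = b * ((b+1) * poch (b+2) m) := by
      rw [poch_succ' b (m+1), poch_succ' (b+1) m, show b+1+1 = b+2 from by ring]
    have e3 : poch a (m+1) = a * poch (a+1) m := poch_succ' a m
    have e4 : b * poch (b+1) (m+1) = poch b (m+1) * (b + ((m:ℝ)+1)) := by
      rw [← e1, poch_succ' b (m+1)]
    have hbm : (0:ℝ) < b + ((m:ℝ)+1) := by positivity
    have h5 : poch (b+1) (m+1) = poch b (m+1) * (b + ((m:ℝ)+1)) / b := by
      field_simp [← e4]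
      exact e4
    have h6 : poch b (m+1) * (b + ((m:ℝ)+1)) = b * ((b+1) * poch (b+2) m) := by
      rw [← e1, e2]
    have h8 : poch (b+2) m = poch b (m+1) * (b + ((m:ℝ)+1)) / (b*(b+1)) := by
      rw [eq_div_iff (mul_pos hb (show (0:ℝ) < b+1 by linarith)).ne']
      linear_combination -h6
    rw [h5, e3, h8]
    have hne1 : ((m:ℝ)+1) ≠ 0 := hm1.ne'
    have hne2 : poch b (m+1) ≠ 0 := hP.ne'
    have hne3 : b + ((m:ℝ)+1) ≠ 0 := hbm.ne'
    have hne4 : b ≠ 0 := hb.ne'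
    have hne5 : b + 1 ≠ 0 := by linarith
    field_simp
    ring
  rw [tsum_congr key, tsum_mul_left,
    gauss_tsum (show (1:ℝ) < b+2 by linarith) (show a+1 < (b+2) - 1 by linarith)]
  have h1 : b ≠ 0 := hb.ne'
  have h2 : b + 1 ≠ 0 := by linarith
  have h3 : b + 2 - 1 - (a+1) = b - a := by ring
  rw [h3]
  have h4 : b - a ≠ 0 := by linarith
  field_simp
  ring
lemma T_telescope {b : ℝ} (hb : 0 < b) (hab : a < b) (J : ℕ) :
    (∑' m : ℕ, poch a (m+1) / ((m+1 : ℝ) * poch b (m+1)))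
      = (∑ j ∈ Finset.range J, a / ((b+(j:ℝ)) * ((b+(j:ℝ)) - a)))
        + ∑' m : ℕ, poch a (m+1) / ((m+1 : ℝ) * poch (b+(J:ℝ)) (m+1)) := by
  induction J with
  | zero => simp
  | succ J ih =>
    rw [Finset.sum_range_succ, ih]
    have h0 : (0:ℝ) ≤ J := Nat.cast_nonneg J
    have h1 : (0:ℝ) < b + J := by linarith
    have h2 : a < b + J := by linarith
    have hrec := T_rec a h1 h2
    have hcast : b + ((J+1 : ℕ) : ℝ) = (b + (J:ℝ)) + 1 := by push_cast; ring
    rw [hcast]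
    linarith

lemma T_tendsto {b : ℝ} (hb : 0 < b) (hab : a < b) :
    Tendsto (fun J : ℕ => ∑' m : ℕ, poch a (m+1) / ((m+1 : ℝ) * poch (b+(J:ℝ)) (m+1)))
      atTop (𝓝 0) := by
  set C := ∑' m : ℕ, |poch a (m+1)| / ((m+1 : ℝ) * poch (b+1) m) with hC
  have hb2 : Tendsto (fun J : ℕ => (1/(b+(J:ℝ))) * C) atTop (𝓝 0) := by
    have h1 : Tendsto (fun J : ℕ => b + (J:ℝ)) atTop atTop :=
      tendsto_atTop_add_const_left atTop b tendsto_natCast_atTop_atTop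
    have := h1.inv_tendsto_atTop
    simpa [one_div] using this.mul_const C
  apply squeeze_zero_norm _ hb2
  intro J
  rw [Real.norm_eq_abs]
  exact T_abs_le a hb hab (le_add_of_nonneg_right (Nat.cast_nonneg J))

lemma T_eq {b : ℝ} (hb : 0 < b) (hab : a < b) :
    (∑' m : ℕ, poch a (m+1) / ((m+1 : ℝ) * poch b (m+1))) = psi b - psi (b - a) := by
  have hd : 0 < b - a := by linarith
  obtain ⟨hsum, hval⟩ := psi_series (x := b - a) (y := b) hd hb
  have hterm : ∀ n : ℕ, 1/((b-a) + (n:ℝ)) - 1/(b + (n:ℝ)) = a / ((b+(n:ℝ)) * ((b+(n:ℝ)) - a)) := by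
    intro n
    have h0 : (0:ℝ) ≤ n := Nat.cast_nonneg n
    have h1 : b - a + (n:ℝ) ≠ 0 := by linarith
    have h2 : b + (n:ℝ) ≠ 0 := by linarith
    have h3 : b + (n:ℝ) - a ≠ 0 := by linarith
    field_simp
    ring
  have hgsum : Summable (fun n : ℕ => a / ((b+(n:ℝ)) * ((b+(n:ℝ)) - a))) :=
    hsum.congr hterm
  have hgval : ∑' n : ℕ, a / ((b+(n:ℝ)) * ((b+(n:ℝ)) - a)) = psi b - psi (b - a) :=
    (tsum_congr hterm).symm.trans hval
  have hpart := hgsum.hasSum.tendsto_sum_nat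
  have h2 : Tendsto (fun J : ℕ => ∑' m : ℕ, poch a (m+1) / ((m+1 : ℝ) * poch (b+(J:ℝ)) (m+1)))
      atTop (𝓝 ((∑' m : ℕ, poch a (m+1) / ((m+1 : ℝ) * poch b (m+1)))
        - ∑' n : ℕ, a / ((b+(n:ℝ)) * ((b+(n:ℝ)) - a)))) := by
    have heq : ∀ J : ℕ, ∑' m : ℕ, poch a (m+1) / ((m+1 : ℝ) * poch (b+(J:ℝ)) (m+1))
        = (∑' m : ℕ, poch a (m+1) / ((m+1 : ℝ) * poch b (m+1)))
          - ∑ j ∈ Finset.range J, a / ((b+(j:ℝ)) * ((b+(j:ℝ)) - a)) := by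
      intro J
      have := T_telescope a hb hab J
      linarith
    simp only [heq]
    exact tendsto_const_nhds.sub hpart
  have h3 := T_tendsto a hb hab
  have h4 := tendsto_nhds_unique h2 h3
  linarith [hgval, h4]
end T

/-- `₃F₂(1,1,c;2,e;1) = ((e-1)/(c-1))(ψ(e-1) - ψ(e-c))`. -/
theorem threeF2_one_one (c e : ℝ) (he1 : 1 < e) (hec : c < e) (hc : c ≠ 1) :
    Summable (fun k : ℕ => poch c k / ((k + 1 : ℝ) * poch e k)) ∧
    ∑' k : ℕ, poch c k / ((k + 1 : ℝ) * poch e k) =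
      ((e - 1) / (c - 1)) * (psi (e - 1) - psi (e - c)) := by
  set a := c - 1 with ha
  set b := e - 1 with hb'
  have hb : 0 < b := by simp only [hb']; linarith
  have hab : a < b := by simp only [ha, hb']; linarith
  have hc1 : c - 1 ≠ 0 := sub_ne_zero.mpr hc
  have he0 : (0:ℝ) < e := by linarith
  have hterm : ∀ k : ℕ, poch c k / ((k + 1 : ℝ) * poch e k)
      = ((e - 1) / (c - 1)) * (poch a (k+1) / ((k+1 : ℝ) * poch b (k+1))) := by
    intro k
    have e1 : poch a (k+1) = (c-1) * poch c k := by
      rw [poch_succ', ha, show c - 1 + 1 = c from by ring]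
    have e2 : poch b (k+1) = (e-1) * poch e k := by
      rw [poch_succ', hb', show e - 1 + 1 = e from by ring]
    have h1 : poch e k ≠ 0 := (poch_pos he0 k).ne'
    have h2 : ((k:ℝ)+1) ≠ 0 := by positivity
    have h3 : e - 1 ≠ 0 := by linarith
    rw [e1, e2]
    field_simp
  constructor
  · exact ((T_summable a hb hab).mul_left ((e-1)/(c-1))).congr (fun k => (hterm k).symm)
  · rw [tsum_congr hterm, tsum_mul_left, T_eq a hb hab,
      show b - a = e - c from by simp only [ha, hb']; ring]
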